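/- Let a > 0, 0 ≤ c ≤ 1, and let M = [[a, 0], [-c, 1]]. Then ((c/a) + 1)^2 / ((c/a) + (c/a^2) + 1) ≤ 4/3, with equality if and only if a = 1 and c = 1. -/

import Mathlib

theorem stmt_8 (a c : ℝ) (ha : 0 < a) (hc0 : 0 ≤ c) (hc1 : c ≤ 1) :
    (c / a + 1) ^ 2 / (c / a + c / a ^ 2 + 1) ≤ 4 / 3 ∧
      ((c / a + 1) ^ 2 / (c / a + c / a ^ 2 + 1) = 4 / 3 ↔ a = 1 ∧ c = 1) := by
  have ha' : a ≠ 0 := ne_of_gt ha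
  have hD : 0 < c / a + c / a ^ 2 + 1 := by positivity
  have hkey : (0:ℝ) ≤ (a - c)^2 + 4 * (c * (1 - c)) := by
    have := sq_nonneg (a - c)
    have : (0:ℝ) ≤ c * (1 - c) := mul_nonneg hc0 (by linarith)
    nlinarith [sq_nonneg (a - c)]
  constructor
  · rw [div_le_div_iff₀ hD (by norm_num : (0:ℝ) < 3), ← sub_nonneg]
    have heq : 4 * (c / a + c / a ^ 2 + 1) - (c / a + 1) ^ 2 * 3
        = ((a - c)^2 + 4 * (c * (1 - c))) / a ^ 2 := by
      field_simp; ring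
    rw [heq]
    positivity
  · constructor
    · intro heq
      rw [div_eq_div_iff (ne_of_gt hD) (by norm_num : (3:ℝ) ≠ 0)] at heq
      field_simp at heq
      have key2 : a^3 * ((a - c)^2 + 4 * (c * (1 - c))) = 0 := by linear_combination (-a^3) * heq
      have key : (a - c)^2 + 4 * (c * (1 - c)) = 0 := by
        rcases mul_eq_zero.mp key2 with h | h
        · exact absurd h (by positivity)
        · exact h
      have h2 : (0:ℝ) ≤ c * (1 - c) := mul_nonneg hc0 (by linarith)
      have hac : a = c := by nlinarith [sq_nonneg (a - c)]
      have hcz : c * (1 - c) = 0 := by nlinarith [sq_nonneg (a - c)]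
      rcases mul_eq_zero.mp hcz with h | h
      · exfalso; rw [hac, h] at ha; exact lt_irrefl 0 ha
      · have hc : c = 1 := by linarith
        exact ⟨hac.trans hc, hc⟩
    · rintro ⟨rfl, rfl⟩
      norm_num
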